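/- Let p be prime, let k_1 ≥ k_2 ≥ ⋯ ≥ k_n ≥ 1 be naturals, let G = ℤ/p^{k_1}ℤ × ⋯ × ℤ/p^{k_n}ℤ and Ĝ = (ℤ/p^{k_1}ℤ)^n, and let Ψ : G^ℤ → Ĝ^ℤ be the componentwise extension of the embedding ψ. Let F : G^ℤ → G^ℤ be any additive CA over G and let L be any LCA over Ĝ such that L ∘ Ψ = Ψ ∘ F. Then F is positively expansive if and only if L is positively expansive. -/

import Mathlib

open LaurentPolynomial
open scoped Classical

/-- `𝕃 m`: Laurent polynomials over `ℤ/mℤ`. -/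
abbrev Lm (m : ℕ) := LaurentPolynomial (ZMod m)

/-- `deg⁺` of a Laurent polynomial: the max of its support (`⊥ = -∞` for `0`). -/
noncomputable def degP {m : ℕ} (α : Lm m) : WithBot ℤ := α.coeff.support.max

/-- `deg⁻` of a Laurent polynomial: the min of its support (`⊤ = +∞` for `0`). -/
noncomputable def degM {m : ℕ} (α : Lm m) : WithTop ℤ := α.coeff.support.min

/-- A monic polynomial `π(t) = α₀ + α₁ t + ⋯ + α_{n-1} t^{n-1} + tⁿ` over `𝕃 m`
is *expansive* if `α₀ ≠ 0`, `deg⁺(α₀) > 0`, `deg⁺(α₀) > deg⁺(αᵢ)`,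
`deg⁻(α₀) < 0` and `deg⁻(α₀) < deg⁻(αᵢ)` for all `1 ≤ i ≤ n-1`. -/
def ExpansivePoly {m : ℕ} (π : Polynomial (Lm m)) : Prop :=
  π.coeff 0 ≠ 0 ∧
  ((0 : WithBot ℤ) < degP (π.coeff 0) ∧
    ∀ i : ℕ, 1 ≤ i → i < π.natDegree → degP (π.coeff i) < degP (π.coeff 0)) ∧
  (degM (π.coeff 0) < (0 : WithTop ℤ) ∧
    ∀ i : ℕ, 1 ≤ i → i < π.natDegree → degM (π.coeff 0) < degM (π.coeff i))

/-- A matrix over `𝕃 m` is expansive if its characteristic polynomial is. -/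
noncomputable def ExpansiveMatrix {m n : ℕ} (A : Matrix (Fin n) (Fin n) (Lm m)) : Prop :=
  ExpansivePoly A.charpoly

/-- The Tychonoff distance on the configuration space `(ℤ → S)`. -/
noncomputable def tdist {S : Type*} (c c' : ℤ → S) : ℝ :=
  if c = c' then 0
  else (2 : ℝ) ^ (-((sInf {k : ℕ | ∃ j : ℤ, j.natAbs = k ∧ c j ≠ c' j} : ℕ) : ℤ))

/-- A map on the configuration space is positively expansive if for some `ε > 0`
any two distinct configurations are eventually `≥ ε` apart. -/
def PosExpansive {S : Type*} (F : (ℤ → S) → (ℤ → S)) : Prop :=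
  ∃ ε : ℝ, 0 < ε ∧ ∀ c c' : ℤ → S, c ≠ c' →
    ∃ ℓ : ℕ, ε ≤ tdist (F^[ℓ] c) (F^[ℓ] c')

/-- The linear CA over `(ℤ/mℤ)ⁿ` determined by a matrix `A ∈ 𝕃_m^{n×n}`:
`F_A(c)_i = ∑_{k ∈ ℤ} A⁽ᵏ⁾ · c_{i-k}` where `A⁽ᵏ⁾` is the coefficient matrix of `Xᵏ` in `A`.
The same formula gives the action of `A` on two-sided formal power series `𝕊_m^n`. -/
noncomputable def lcaFun {m n : ℕ} (A : Matrix (Fin n) (Fin n) (Lm m)) :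
    (ℤ → Fin n → ZMod m) → (ℤ → Fin n → ZMod m) :=
  fun c i a => ∑ b, Finsupp.sum (A a b).coeff (fun k coef => coef * c (i - k) b)

/-- `Left(𝕊ⁿ_m, s)`: two-sided series with `deg⁺ = s`. -/
def SLeft {V : Type*} [Zero V] (s : ℤ) : Set (ℤ → V) :=
  {υ | (∀ j : ℤ, s < j → υ j = 0) ∧ υ s ≠ 0}

/-- `Left*(𝕊ⁿ_m, s)`: two-sided series with `deg⁺ ≤ s`. -/
def SLeftStar {V : Type*} [Zero V] (s : ℤ) : Set (ℤ → V) :=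
  {υ | ∀ j : ℤ, s < j → υ j = 0}

/-- `Right(𝕊ⁿ_m, s)`: two-sided series with `deg⁻ = s`. -/
def SRight {V : Type*} [Zero V] (s : ℤ) : Set (ℤ → V) :=
  {υ | (∀ j : ℤ, j < s → υ j = 0) ∧ υ s ≠ 0}

/-- `Right*(𝕊ⁿ_m, s)`: two-sided series with `deg⁻ ≥ s`. -/
def SRightStar {V : Type*} [Zero V] (s : ℤ) : Set (ℤ → V) :=
  {υ | ∀ j : ℤ, j < s → υ j = 0}

/-- Reduction of a Laurent polynomial over `ℤ/mℤ` modulo `q` (for `q ∣ m`). -/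
noncomputable def lmod {m q : ℕ} (h : q ∣ m) (α : Lm m) : Lm q :=
  AddMonoidAlgebra.ofCoeff (Finsupp.mapRange (ZMod.castHom h (ZMod q)) (map_zero _) α.coeff)

/-- Entrywise reduction of a matrix of Laurent polynomials modulo `q`. -/
noncomputable def matMod {m q n : ℕ} (h : q ∣ m) (B : Matrix (Fin n) (Fin n) (Lm m)) :
    Matrix (Fin n) (Fin n) (Lm q) :=
  fun a b => lmod h (B a b)

/-- `deg⁺` on the field of fractions of `𝕃 p`: `deg⁺(α/β) = deg⁺(α) - deg⁺(β)`,
computed on a representation given by `IsLocalization.sec`; `deg⁺ 0 = ⊥`. -/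
noncomputable def degPF {p : ℕ} (φ : FractionRing (Lm p)) : WithBot ℤ :=
  if φ = 0 then ⊥
  else ((WithBot.unbotD 0 (degP ((IsLocalization.sec (nonZeroDivisors (Lm p)) φ).1))
        - WithBot.unbotD 0 (degP (((IsLocalization.sec (nonZeroDivisors (Lm p)) φ).2 : Lm p))) : ℤ) : WithBot ℤ)

/-- The `(x, y)` entry (with `ℕ`-indices) of the companion matrix of a polynomial `π`
viewed as a `d × d` matrix: subdiagonal entries `1`,
last column `(-π.coeff 0, …, -π.coeff (d-1))ᵀ`, the rest `0`. -/
def companionEntry {R : Type*} [CommRing R] (d : ℕ) (π : Polynomial R) (x y : ℕ) : R :=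
  if y = d - 1 then -π.coeff x else if x = y + 1 then 1 else 0

/-- The companion matrix (as a `d × d` matrix) of a polynomial `π`. -/
def companionMatrix {R : Type*} [CommRing R] (d : ℕ) (π : Polynomial R) :
    Matrix (Fin d) (Fin d) R :=
  fun a b => companionEntry d π a b

/-- A matrix is in rational canonical form if it is block diagonal with blocks the
companion matrices of monic polynomials `π₁, …, π_s` of degree at least one with
`πᵢ ∣ πⱼ` for `i ≤ j`.  The blocks are described by the offsets `off i` of their
top-left corners. -/
def IsRCF {R : Type*} [CommRing R] {n : ℕ} (C : Matrix (Fin n) (Fin n) R) : Prop :=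
  ∃ (s : ℕ) (π : Fin s → Polynomial R) (off : Fin (s + 1) → ℕ),
    (∀ i, (π i).Monic) ∧ (∀ i, 1 ≤ (π i).natDegree) ∧
    (∀ i j, i ≤ j → π i ∣ π j) ∧
    off 0 = 0 ∧ off (Fin.last s) = n ∧
    (∀ i : Fin s, off i.succ = off i.castSucc + (π i).natDegree) ∧
    (∀ (i : Fin s) (a b : Fin n),
      off i.castSucc ≤ (a : ℕ) → (a : ℕ) < off i.succ →
      off i.castSucc ≤ (b : ℕ) → (b : ℕ) < off i.succ →
      C a b = companionEntry (π i).natDegree (π i)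
        ((a : ℕ) - off i.castSucc) ((b : ℕ) - off i.castSucc)) ∧
    (∀ a b : Fin n,
      (∀ i : Fin s, ¬(off i.castSucc ≤ (a : ℕ) ∧ (a : ℕ) < off i.succ ∧
        off i.castSucc ≤ (b : ℕ) ∧ (b : ℕ) < off i.succ)) → C a b = 0)

/-- `F` is (the global rule of) a cellular automaton: it is given by a local rule `f`
of some radius `r`, `F(c)_i = f(c_{i-r}, …, c_{i+r})`. -/
def IsCA {S : Type*} (F : (ℤ → S) → (ℤ → S)) : Prop :=
  ∃ (r : ℕ) (f : (Fin (2 * r + 1) → S) → S),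
    ∀ (c : ℤ → S) (i : ℤ), F c i = f (fun t => c (i - (r : ℤ) + ((t : ℕ) : ℤ)))

/-- The embedding `ψ : G → Ĝ`, `ψ(h)ⁱ = p^{k₁ - kᵢ} hⁱ` (using the canonical lift
`ZMod.val`), extended componentwise to configurations, `Ψ : G^ℤ → Ĝ^ℤ`. -/
noncomputable def PsiMap (p n : ℕ) (hn : 0 < n) (k : Fin n → ℕ)
    (c : ℤ → ∀ i : Fin n, ZMod (p ^ k i)) : ℤ → Fin n → ZMod (p ^ k ⟨0, hn⟩) :=
  fun j i => ((c j i).val : ZMod (p ^ k ⟨0, hn⟩)) *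
    (p : ZMod (p ^ k ⟨0, hn⟩)) ^ (k ⟨0, hn⟩ - k i)


section AuxStmt14

lemma tdist_nonneg' {S : Type*} (c c' : ℤ → S) : 0 ≤ tdist c c' := by
  unfold tdist
  split
  · exact le_rfl
  · positivity

lemma tdist_congr {S T : Type*} {c c' : ℤ → S} {d d' : ℤ → T}
    (h : ∀ j, c j ≠ c' j ↔ d j ≠ d' j) : tdist c c' = tdist d d' := by
  have hset : {m : ℕ | ∃ j : ℤ, j.natAbs = m ∧ c j ≠ c' j}
      = {m : ℕ | ∃ j : ℤ, j.natAbs = m ∧ d j ≠ d' j} := by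
    ext m
    constructor
    · rintro ⟨j, hj, hne⟩; exact ⟨j, hj, (h j).mp hne⟩
    · rintro ⟨j, hj, hne⟩; exact ⟨j, hj, (h j).mpr hne⟩
  have heq : (c = c') ↔ (d = d') := by
    constructor
    · intro hc; funext j; by_contra hdj
      exact (h j).mpr hdj (congrFun hc j)
    · intro hd; funext j; by_contra hcj
      exact (h j).mp hcj (congrFun hd j)
  unfold tdist
  by_cases hc : c = c'
  · rw [if_pos hc, if_pos (heq.mp hc)]
  · rw [if_neg hc, if_neg (fun hd => hc (heq.mpr hd)), hset]

lemma tdist_le_left {S : Type*} [Zero S] {x : ℤ → S} {T : Type*} {c c' : ℤ → T}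
    (h : ∀ j, x j ≠ 0 → c j ≠ c' j) : tdist x 0 ≤ tdist c c' := by
  by_cases hx : x = (0 : ℤ → S)
  · rw [hx]
    have : tdist (0 : ℤ → S) 0 = 0 := by simp [tdist]
    rw [this]; exact tdist_nonneg' c c'
  · obtain ⟨j₁, hj₁⟩ : ∃ j, x j ≠ 0 := by
      by_contra hall; push_neg at hall; exact hx (funext hall)
    have hcc : c ≠ c' := fun hcc' => h j₁ hj₁ (congrFun hcc' j₁)
    unfold tdist
    rw [if_neg hx, if_neg hcc]
    have hsub : {m : ℕ | ∃ j : ℤ, j.natAbs = m ∧ x j ≠ (0 : ℤ → S) j}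
        ⊆ {m : ℕ | ∃ j : ℤ, j.natAbs = m ∧ c j ≠ c' j} := by
      rintro m ⟨j, hj, hne⟩
      exact ⟨j, hj, h j (by simpa using hne)⟩
    have hne : {m : ℕ | ∃ j : ℤ, j.natAbs = m ∧ x j ≠ (0 : ℤ → S) j}.Nonempty :=
      ⟨j₁.natAbs, j₁, rfl, by simpa using hj₁⟩
    have h1 : sInf {m : ℕ | ∃ j : ℤ, j.natAbs = m ∧ c j ≠ c' j}
        ≤ sInf {m : ℕ | ∃ j : ℤ, j.natAbs = m ∧ x j ≠ (0 : ℤ → S) j} :=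
      Nat.sInf_le (hsub (Nat.sInf_mem hne))
    apply zpow_le_zpow_right₀ (by norm_num : (1:ℝ) ≤ 2)
    omega

lemma psiInj {p : ℕ} (hp : p.Prime) {a b : ℕ} (hab : a ≤ b) {x y : ZMod (p ^ a)}
    (h : (x.val : ZMod (p ^ b)) * (p : ZMod (p ^ b)) ^ (b - a)
      = (y.val : ZMod (p ^ b)) * (p : ZMod (p ^ b)) ^ (b - a)) : x = y := by
  haveI : NeZero (p ^ a) := ⟨pow_ne_zero _ hp.pos.ne'⟩
  haveI : NeZero (p ^ b) := ⟨pow_ne_zero _ hp.pos.ne'⟩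
  have hx : ∀ z : ZMod (p ^ a), ((z.val : ZMod (p ^ b)) * (p : ZMod (p ^ b)) ^ (b - a))
      = ((z.val * p ^ (b - a) : ℕ) : ZMod (p ^ b)) := by intro z; push_cast; ring
  rw [hx x, hx y] at h
  have hlt : ∀ z : ZMod (p ^ a), z.val * p ^ (b - a) < p ^ b := by
    intro z
    calc z.val * p ^ (b - a) < p ^ a * p ^ (b - a) :=
          (Nat.mul_lt_mul_right (pow_pos hp.pos _)).mpr (ZMod.val_lt z)
      _ = p ^ b := by rw [← pow_add, Nat.add_sub_cancel' hab]
  have hv := congrArg ZMod.val h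
  rw [ZMod.val_cast_of_lt (hlt x), ZMod.val_cast_of_lt (hlt y)] at hv
  exact ZMod.val_injective _ (Nat.eq_of_mul_eq_mul_right (pow_pos hp.pos _) hv)

lemma chiSpec {p : ℕ} (hp : p.Prime) {a b : ℕ} (ha : 1 ≤ a) (hab : a ≤ b) (x : ZMod (p ^ b)) :
    (((x.val * p ^ (a - 1) : ℕ) : ZMod (p ^ a)).val : ZMod (p ^ b)) * (p : ZMod (p ^ b)) ^ (b - a)
      = x * (p : ZMod (p ^ b)) ^ (b - 1) := by
  haveI : NeZero (p ^ a) := ⟨pow_ne_zero _ hp.pos.ne'⟩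
  haveI : NeZero (p ^ b) := ⟨pow_ne_zero _ hp.pos.ne'⟩
  rw [ZMod.val_natCast]
  have h1 : (((x.val * p ^ (a - 1)) % p ^ a : ℕ) : ZMod (p ^ b)) * (p : ZMod (p ^ b)) ^ (b - a)
      = ((((x.val * p ^ (a - 1)) % p ^ a) * p ^ (b - a) : ℕ) : ZMod (p ^ b)) := by
    push_cast; ring
  have h2 : x * (p : ZMod (p ^ b)) ^ (b - 1) = ((x.val * p ^ (b - 1) : ℕ) : ZMod (p ^ b)) := by
    conv_lhs => rw [← ZMod.cast_id _ x, ← ZMod.natCast_val x]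
    push_cast; ring
  rw [h1, h2, ZMod.natCast_eq_natCast_iff]
  have m1 : (x.val * p ^ (a - 1)) % p ^ a ≡ x.val * p ^ (a - 1) [MOD p ^ a] := Nat.mod_modEq _ _
  have m2 := m1.mul_right' (p ^ (b - a))
  have hmod : p ^ a * p ^ (b - a) = p ^ b := by rw [← pow_add, Nat.add_sub_cancel' hab]
  rw [hmod] at m2
  have hrhs : x.val * p ^ (a - 1) * p ^ (b - a) = x.val * p ^ (b - 1) := by
    rw [mul_assoc, ← pow_add]
    congr 2
    omega
  rw [hrhs] at m2
  exact m2

end AuxStmt14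

/-- let `G = ℤ/p^{k₁}ℤ × ⋯ × ℤ/p^{kₙ}ℤ` with `k₁ ≥ ⋯ ≥ kₙ ≥ 1`,
`Ĝ = (ℤ/p^{k₁}ℤ)ⁿ`, and `Ψ : G^ℤ → Ĝ^ℤ` the componentwise extension of `ψ`.
If `F` is an additive CA over `G` and `L` is an LCA over `Ĝ` with `L ∘ Ψ = Ψ ∘ F`,
then `F` is positively expansive iff `L` is positively expansive. -/
theorem stmt14 (p : ℕ) (hp : p.Prime) (n : ℕ) (hn : 0 < n) (k : Fin n → ℕ)
    (hk1 : ∀ i : Fin n, 1 ≤ k i)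
    (hanti : ∀ i j : Fin n, i ≤ j → k j ≤ k i)
    (F : (ℤ → ∀ i : Fin n, ZMod (p ^ k i)) → (ℤ → ∀ i : Fin n, ZMod (p ^ k i)))
    (hFca : IsCA F)
    (hFadd : ∀ c c', F (c + c') = F c + F c')
    (L : (ℤ → Fin n → ZMod (p ^ k ⟨0, hn⟩)) → (ℤ → Fin n → ZMod (p ^ k ⟨0, hn⟩)))
    (hLlin : ∃ A : Matrix (Fin n) (Fin n) (Lm (p ^ k ⟨0, hn⟩)), L = lcaFun A)
    (hcomm : ∀ c, L (PsiMap p n hn k c) = PsiMap p n hn k (F c)) :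
    PosExpansive F ↔ PosExpansive L := by
  obtain ⟨A, hLA⟩ := hLlin
  haveI : Fact p.Prime := ⟨hp⟩
  haveI hNZ : ∀ i : Fin n, NeZero (p ^ k i) := fun i => ⟨pow_ne_zero _ hp.pos.ne'⟩
  haveI : NeZero (p ^ k ⟨0, hn⟩) := hNZ ⟨0, hn⟩
  have hkK : ∀ i, k i ≤ k ⟨0, hn⟩ := fun i => hanti ⟨0, hn⟩ i (by simp [Fin.le_def])
  have hK1 : 1 ≤ k ⟨0, hn⟩ := hk1 _
  -- linearity of L
  have hL0 : L 0 = 0 := by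
    rw [hLA]; funext j a; simp [lcaFun]
  have hLsub : ∀ x y, L (x - y) = L x - L y := by
    rw [hLA]; intro x y; funext j a
    simp [lcaFun, Pi.sub_apply, mul_sub, Finsupp.sum_sub, Finset.sum_sub_distrib]
  have hLsmul : ∀ (t : ZMod (p ^ k ⟨0, hn⟩)) x,
      L (fun j i => t * x j i) = fun j i => t * L x j i := by
    rw [hLA]; intro t x; funext j a
    simp [lcaFun, Finset.mul_sum, Finsupp.mul_sum, mul_left_comm]
  have hIter0 : ∀ ℓ, L^[ℓ] 0 = 0 := by
    intro ℓ; induction ℓ with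
    | zero => rfl
    | succ m ih => rw [Function.iterate_succ_apply, hL0, ih]
  have hItersub : ∀ (ℓ : ℕ) x y, L^[ℓ] (x - y) = L^[ℓ] x - L^[ℓ] y := by
    intro ℓ; induction ℓ with
    | zero => intro x y; rfl
    | succ m ih =>
      intro x y
      rw [Function.iterate_succ_apply, Function.iterate_succ_apply,
        Function.iterate_succ_apply, hLsub, ih]
  have hItersmul : ∀ (ℓ : ℕ) (t : ZMod (p ^ k ⟨0, hn⟩)) x,
      L^[ℓ] (fun j i => t * x j i) = fun j i => t * L^[ℓ] x j i := by
    intro ℓ; induction ℓ with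
    | zero => intro t x; rfl
    | succ m ih =>
      intro t x
      rw [Function.iterate_succ_apply, hLsmul, ih, Function.iterate_succ_apply]
  have hItercomm : ∀ (ℓ : ℕ) c, L^[ℓ] (PsiMap p n hn k c) = PsiMap p n hn k (F^[ℓ] c) := by
    intro ℓ; induction ℓ with
    | zero => intro c; rfl
    | succ m ih =>
      intro c
      rw [Function.iterate_succ_apply, hcomm, ih, Function.iterate_succ_apply]
  -- Ψ preserves distances
  have hpsi_inj : ∀ (c c' : ℤ → ∀ i, ZMod (p ^ k i)) (j : ℤ),
      c j ≠ c' j ↔ PsiMap p n hn k c j ≠ PsiMap p n hn k c' j := by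
    intro c c' j
    constructor
    · intro hne hEq
      apply hne
      funext i
      exact psiInj hp (hkK i) (congrFun hEq i)
    · intro hne hEq
      apply hne
      funext i
      simp only [PsiMap]
      rw [hEq]
  have htd : ∀ c c', tdist (PsiMap p n hn k c) (PsiMap p n hn k c') = tdist c c' :=
    fun c c' => (tdist_congr (fun j => hpsi_inj c c' j)).symm
  have hPsi0 : PsiMap p n hn k 0 = 0 := by
    funext j i; simp [PsiMap]
  constructor
  · -- F positively expansive → L positively expansive
    rintro ⟨ε, hε, hFexp⟩
    refine ⟨ε, hε, ?_⟩
    intro d d' hdd'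
    set e : ℤ → Fin n → ZMod (p ^ k ⟨0, hn⟩) := d - d' with he
    have hee : e ≠ 0 := sub_ne_zero.mpr hdd'
    obtain ⟨j₁, hj₁⟩ := Function.ne_iff.mp hee
    obtain ⟨i₁, hi₁⟩ := Function.ne_iff.mp hj₁
    have hi₁' : e j₁ i₁ ≠ 0 := by simpa using hi₁
    set Sv := {m : ℕ | ∃ j : ℤ, ∃ i : Fin n, e j i ≠ 0 ∧ padicValNat p ((e j i).val) = m}
      with hSv
    have hSne : Sv.Nonempty := ⟨_, j₁, i₁, hi₁', rfl⟩
    set s := sInf Sv with hs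
    obtain ⟨j₀, i₀, hne₀, hval₀⟩ := Nat.sInf_mem hSne
    have hvne : ((e j₀ i₀).val : ℕ) ≠ 0 := fun h => hne₀ ((ZMod.val_eq_zero _).mp h)
    have hdvd : ∀ j i, p ^ s ∣ (e j i).val := by
      intro j i
      by_cases h0 : e j i = 0
      · rw [h0]; simp
      · have hle : s ≤ padicValNat p ((e j i).val) := Nat.sInf_le ⟨j, i, h0, rfl⟩
        exact dvd_trans (pow_dvd_pow p hle) pow_padicValNat_dvd
    have hsK : s < k ⟨0, hn⟩ := by
      have h1 : p ^ s ≤ (e j₀ i₀).val := by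
        apply Nat.le_of_dvd (Nat.pos_of_ne_zero hvne)
        exact hdvd j₀ i₀
      have h2 : (e j₀ i₀).val < p ^ k ⟨0, hn⟩ := ZMod.val_lt _
      exact (Nat.pow_lt_pow_iff_right hp.one_lt).mp (lt_of_le_of_lt h1 h2)
    set w : ℤ → Fin n → ZMod (p ^ k ⟨0, hn⟩) :=
      fun j i => (((e j i).val / p ^ s : ℕ) : ZMod (p ^ k ⟨0, hn⟩)) with hw
    have hwe : ∀ j i, (p : ZMod (p ^ k ⟨0, hn⟩)) ^ s * w j i = e j i := by
      intro j i
      have h1 : e j i = ((p ^ s * ((e j i).val / p ^ s) : ℕ) : ZMod (p ^ k ⟨0, hn⟩)) := by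
        rw [Nat.mul_div_cancel' (hdvd j i)]
        rw [ZMod.natCast_val, ZMod.cast_id]
      rw [h1, hw]; push_cast; ring
    set c : ℤ → ∀ i : Fin n, ZMod (p ^ k i) :=
      fun j i => (((w j i).val * p ^ (k i - 1) : ℕ) : ZMod (p ^ k i)) with hc
    have hPsic : ∀ j i, PsiMap p n hn k c j i
        = (p : ZMod (p ^ k ⟨0, hn⟩)) ^ (k ⟨0, hn⟩ - 1 - s) * e j i := by
      intro j i
      show ((c j i).val : ZMod (p ^ k ⟨0, hn⟩)) * (p : ZMod (p ^ k ⟨0, hn⟩)) ^ (k ⟨0, hn⟩ - k i) = _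
      rw [hc]
      rw [chiSpec hp (hk1 i) (hkK i)]
      rw [← hwe j i]
      have hpp : (p : ZMod (p ^ k ⟨0, hn⟩)) ^ (k ⟨0, hn⟩ - 1 - s) * (p : ZMod (p ^ k ⟨0, hn⟩)) ^ s
          = (p : ZMod (p ^ k ⟨0, hn⟩)) ^ (k ⟨0, hn⟩ - 1) := by
        rw [← pow_add]; congr 1; omega
      rw [← hpp]; ring
    have hPsine : PsiMap p n hn k c j₀ i₀ ≠ 0 := by
      rw [hPsic j₀ i₀, ← hwe j₀ i₀]
      have hcast : (p : ZMod (p ^ k ⟨0, hn⟩)) ^ (k ⟨0, hn⟩ - 1 - s)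
          * ((p : ZMod (p ^ k ⟨0, hn⟩)) ^ s * w j₀ i₀)
          = ((p ^ (k ⟨0, hn⟩ - 1) * ((e j₀ i₀).val / p ^ s) : ℕ) : ZMod (p ^ k ⟨0, hn⟩)) := by
        rw [← mul_assoc, ← pow_add]
        have : (k ⟨0, hn⟩ - 1 - s) + s = k ⟨0, hn⟩ - 1 := by omega
        rw [this, hw]; push_cast; ring
      rw [hcast]
      intro h0
      have hdd : p ^ k ⟨0, hn⟩ ∣ p ^ (k ⟨0, hn⟩ - 1) * ((e j₀ i₀).val / p ^ s) :=
        (ZMod.natCast_eq_zero_iff _ _).mp h0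
      have hdd' : p ^ (k ⟨0, hn⟩ - 1) * p ∣ p ^ (k ⟨0, hn⟩ - 1) * ((e j₀ i₀).val / p ^ s) := by
        rw [← pow_succ, show (k ⟨0, hn⟩ - 1) + 1 = k ⟨0, hn⟩ by omega]
        exact hdd
      have hpu : p ∣ (e j₀ i₀).val / p ^ s :=
        (Nat.mul_dvd_mul_iff_left (pow_pos hp.pos (k ⟨0, hn⟩ - 1))).mp hdd'
      have hdd2 : p ^ (s + 1) ∣ (e j₀ i₀).val := by
        rw [pow_succ]
        calc p ^ s * p ∣ p ^ s * ((e j₀ i₀).val / p ^ s) := mul_dvd_mul_left _ hpu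
          _ = (e j₀ i₀).val := Nat.mul_div_cancel' (hdvd j₀ i₀)
      have hval₀' : padicValNat p ((e j₀ i₀).val) = s := hval₀
      rcases (padicValNat_dvd_iff _ _).mp hdd2 with h | h
      · exact hvne h
      · omega
    have hc0 : c ≠ 0 := by
      intro h
      apply hPsine
      rw [h, hPsi0]
      rfl
    obtain ⟨ℓ, hℓ⟩ := hFexp c 0 hc0
    refine ⟨ℓ, ?_⟩
    have hx : L^[ℓ] (PsiMap p n hn k c)
        = fun j (i : Fin n) => (p : ZMod (p ^ k ⟨0, hn⟩)) ^ (k ⟨0, hn⟩ - 1 - s)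
            * (L^[ℓ] e) j i := by
      have h1 : PsiMap p n hn k c
          = fun j i => (p : ZMod (p ^ k ⟨0, hn⟩)) ^ (k ⟨0, hn⟩ - 1 - s) * e j i := by
        funext j i; exact hPsic j i
      rw [h1, hItersmul]
    have key : tdist (fun j (i : Fin n) => (p : ZMod (p ^ k ⟨0, hn⟩)) ^ (k ⟨0, hn⟩ - 1 - s)
          * (L^[ℓ] e) j i) 0 ≤ tdist (L^[ℓ] d) (L^[ℓ] d') := by
      apply tdist_le_left
      intro j hj hEq
      apply hj
      funext i
      have h1 : (L^[ℓ] e) j i = 0 := by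
        have h2 : L^[ℓ] e = L^[ℓ] d - L^[ℓ] d' := by rw [he, hItersub]
        rw [h2]
        simp [hEq]
      simp [h1]
    calc ε ≤ tdist (F^[ℓ] c) (F^[ℓ] 0) := hℓ
      _ = tdist (PsiMap p n hn k (F^[ℓ] c)) (PsiMap p n hn k (F^[ℓ] 0)) := (htd _ _).symm
      _ = tdist (L^[ℓ] (PsiMap p n hn k c)) (L^[ℓ] (PsiMap p n hn k 0)) := by
          rw [hItercomm, hItercomm]
      _ = tdist (fun j (i : Fin n) => (p : ZMod (p ^ k ⟨0, hn⟩)) ^ (k ⟨0, hn⟩ - 1 - s)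
            * (L^[ℓ] e) j i) 0 := by rw [hPsi0, hIter0, hx]
      _ ≤ tdist (L^[ℓ] d) (L^[ℓ] d') := key
  · -- L positively expansive → F positively expansive
    rintro ⟨ε, hε, hLexp⟩
    refine ⟨ε, hε, ?_⟩
    intro c c' hcc'
    have hPne : PsiMap p n hn k c ≠ PsiMap p n hn k c' := by
      obtain ⟨j, hj⟩ := Function.ne_iff.mp hcc'
      intro hEq
      exact (hpsi_inj c c' j).mp hj (congrFun hEq j)
    obtain ⟨ℓ, hℓ⟩ := hLexp _ _ hPne
    refine ⟨ℓ, ?_⟩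
    calc ε ≤ tdist (L^[ℓ] (PsiMap p n hn k c)) (L^[ℓ] (PsiMap p n hn k c')) := hℓ
      _ = tdist (PsiMap p n hn k (F^[ℓ] c)) (PsiMap p n hn k (F^[ℓ] c')) := by
          rw [hItercomm, hItercomm]
      _ = tdist (F^[ℓ] c) (F^[ℓ] c') := htd _ _
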